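/- arXiv:2406.07746 — 8 statements merged into one kernel-verified Lean document; each statement's English description precedes it below -/
import Mathlib

section
/- Let X and Δ be real p×q matrices, let V be a q×q positive definite real matrix, and let r > 0 satisfy ΔᵀΔ ⪯ r·V⁻¹. Then for every positive semidefinite p×p real matrix P and every real μ with μ ≥ r + 2‖X‖·‖V‖^{1/2}·r^{1/2}, the two-sided Loewner bound −μ·tr(P)·V⁻¹ ⪯ (X+Δ)ᵀP(X+Δ) − XᵀPX ⪯ μ·tr(P)·V⁻¹ holds. -/
open Matrix
open scoped Matrix.Norms.L2Operator

section Aux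

open scoped MatrixOrder

lemma dot_mulVec_mulVec {m n : ℕ} (A : Matrix (Fin m) (Fin n) ℝ) (x y : Fin n → ℝ) :
    (A *ᵥ x) ⬝ᵥ (A *ᵥ y) = x ⬝ᵥ (Aᵀ * A) *ᵥ y := by
  rw [dotProduct_mulVec, vecMul_mulVec, ← dotProduct_mulVec]

lemma quad_expand {m n : ℕ} (M : Matrix (Fin m) (Fin m) ℝ) (A : Matrix (Fin m) (Fin n) ℝ)
    (x y : Fin n → ℝ) :
    x ⬝ᵥ (Aᵀ * M * A) *ᵥ y = (A *ᵥ x) ⬝ᵥ M *ᵥ (A *ᵥ y) := by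
  rw [← mulVec_mulVec, ← mulVec_mulVec, dotProduct_mulVec x Aᵀ, vecMul_transpose]

lemma dot_cs {n : ℕ} (u v : Fin n → ℝ) : (u ⬝ᵥ v) ^ 2 ≤ (u ⬝ᵥ u) * (v ⬝ᵥ v) := by
  have h := Finset.sum_mul_sq_le_sq_mul_sq Finset.univ u v
  simpa [dotProduct, sq, Finset.sum_congr] using h

lemma dot_self_nonneg {n : ℕ} (v : Fin n → ℝ) : 0 ≤ v ⬝ᵥ v :=
  Finset.sum_nonneg fun i _ => mul_self_nonneg _

lemma herm_transpose {n : ℕ} {M : Matrix (Fin n) (Fin n) ℝ} (hM : M.IsHermitian) : Mᵀ = M := by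
  rw [← conjTranspose_eq_transpose_of_trivial]; exact hM

lemma quad_sym {n : ℕ} {M : Matrix (Fin n) (Fin n) ℝ} (hM : M.IsHermitian) (u v : Fin n → ℝ) :
    u ⬝ᵥ M *ᵥ v = v ⬝ᵥ M *ᵥ u := by
  rw [dotProduct_mulVec, ← mulVec_transpose, herm_transpose hM, dotProduct_comm,
    dotProduct_mulVec, ← mulVec_transpose, herm_transpose hM, dotProduct_comm]

lemma psd_dot_sqrt {n : ℕ} {M : Matrix (Fin n) (Fin n) ℝ} (hM : M.PosSemidef)
    (u v : Fin n → ℝ) :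
    u ⬝ᵥ M *ᵥ v = (CFC.sqrt M *ᵥ u) ⬝ᵥ (CFC.sqrt M *ᵥ v) := by
  rw [dot_mulVec_mulVec, herm_transpose (CFC.sqrt_nonneg M).posSemidef.1, CFC.sqrt_mul_sqrt_self M hM.nonneg]

lemma psd_cs {n : ℕ} {M : Matrix (Fin n) (Fin n) ℝ} (hM : M.PosSemidef) (u v : Fin n → ℝ) :
    (u ⬝ᵥ M *ᵥ v) ^ 2 ≤ (u ⬝ᵥ M *ᵥ u) * (v ⬝ᵥ M *ᵥ v) := by
  rw [psd_dot_sqrt hM u v, psd_dot_sqrt hM u u, psd_dot_sqrt hM v v]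
  exact dot_cs _ _

lemma psd_trace_nonneg {n : ℕ} {M : Matrix (Fin n) (Fin n) ℝ} (hM : M.PosSemidef) :
    0 ≤ M.trace := by
  rw [Matrix.trace]
  refine Finset.sum_nonneg fun i _ => ?_
  have h := hM.dotProduct_mulVec_nonneg (Pi.single i 1)
  simpa [dotProduct, mulVec, Pi.single_apply, Matrix.diag] using h

lemma psd_quad_le_trace {n : ℕ} {M : Matrix (Fin n) (Fin n) ℝ} (hM : M.PosSemidef)
    (y : Fin n → ℝ) : y ⬝ᵥ M *ᵥ y ≤ M.trace * (y ⬝ᵥ y) := by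
  set S := CFC.sqrt M with hSdef
  have hsym : ∀ i j, S j i = S i j := fun i j => by
    have h := congrFun (congrFun (herm_transpose (CFC.sqrt_nonneg M).posSemidef.1) i) j
    simpa [Matrix.transpose_apply] using h
  have htr : M.trace = ∑ i, ∑ j, S i j ^ 2 := by
    conv_lhs => rw [← CFC.sqrt_mul_sqrt_self M hM.nonneg]
    rw [Matrix.trace]
    refine Finset.sum_congr rfl fun i _ => ?_
    simp only [Matrix.diag, Matrix.mul_apply, sq, ← hSdef]
    exact Finset.sum_congr rfl fun j _ => by rw [← hsym i j]
  rw [psd_dot_sqrt hM y y, htr, Finset.sum_mul]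
  have h1 : ∀ i : Fin n, (S *ᵥ y) i * (S *ᵥ y) i ≤ (∑ j, S i j ^ 2) * (y ⬝ᵥ y) := by
    intro i
    have := Finset.sum_mul_sq_le_sq_mul_sq Finset.univ (S i) y
    simpa [mulVec, dotProduct, sq] using this
  exact Finset.sum_le_sum fun i _ => h1 i

lemma mulVec_dot_le {m n : ℕ} (A : Matrix (Fin m) (Fin n) ℝ) (w : Fin n → ℝ) :
    (A *ᵥ w) ⬝ᵥ (A *ᵥ w) ≤ ‖A‖ ^ 2 * (w ⬝ᵥ w) := by
  have key : ∀ (k : ℕ) (u : Fin k → ℝ),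
      u ⬝ᵥ u = ‖(EuclideanSpace.equiv (Fin k) ℝ).symm u‖ ^ 2 := by
    intro k u
    rw [EuclideanSpace.real_norm_sq_eq]
    simp [dotProduct, sq]
  have h := A.l2_opNorm_mulVec ((EuclideanSpace.equiv (Fin n) ℝ).symm w)
  have h2 : ‖(EuclideanSpace.equiv (Fin m) ℝ).symm (A *ᵥ w)‖ ^ 2 ≤
      (‖A‖ * ‖(EuclideanSpace.equiv (Fin n) ℝ).symm w‖) ^ 2 := by
    apply pow_le_pow_left₀ (norm_nonneg _) ?_ 2
    exact h
  rw [key m (A *ᵥ w), key n w]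
  calc ‖(EuclideanSpace.equiv (Fin m) ℝ).symm (A *ᵥ w)‖ ^ 2 ≤ _ := h2
    _ = ‖A‖ ^ 2 * ‖(EuclideanSpace.equiv (Fin n) ℝ).symm w‖ ^ 2 := by ring

lemma quad_le_norm {n : ℕ} (A : Matrix (Fin n) (Fin n) ℝ) (w : Fin n → ℝ) :
    w ⬝ᵥ A *ᵥ w ≤ ‖A‖ * (w ⬝ᵥ w) := by
  have h1 : (w ⬝ᵥ A *ᵥ w) ^ 2 ≤ (w ⬝ᵥ w) * ((A *ᵥ w) ⬝ᵥ (A *ᵥ w)) := dot_cs w (A *ᵥ w)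
  have h2 := mulVec_dot_le A w
  have hw : 0 ≤ w ⬝ᵥ w := dot_self_nonneg w
  have hA : 0 ≤ ‖A‖ := norm_nonneg _
  nlinarith [h1, h2, hw, hA, sq_nonneg (w ⬝ᵥ A *ᵥ w - ‖A‖ * (w ⬝ᵥ w)),
    mul_le_mul_of_nonneg_left h2 hw, mul_nonneg hA hw]

lemma dot_le_norm_inv_quad {n : ℕ} {V : Matrix (Fin n) (Fin n) ℝ} (hV : V.PosDef)
    (x : Fin n → ℝ) : x ⬝ᵥ x ≤ ‖V‖ * (x ⬝ᵥ V⁻¹ *ᵥ x) := by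
  set S := CFC.sqrt V with hSdef
  have hSS : S * S = V := CFC.sqrt_mul_sqrt_self V hV.posSemidef.nonneg
  have hSsym : Sᵀ = S := herm_transpose (CFC.sqrt_nonneg V).posSemidef.1
  set u := V⁻¹ *ᵥ x with hu
  have hVu : V *ᵥ u = x := by
    rw [hu, mulVec_mulVec, Matrix.mul_nonsing_inv V hV.det_pos.ne'.isUnit, one_mulVec]
  have hVV : V * V = Sᵀ * V * S := by
    rw [hSsym, ← hSS]; simp only [Matrix.mul_assoc]
  have h1 : x ⬝ᵥ x = (S *ᵥ u) ⬝ᵥ V *ᵥ (S *ᵥ u) := by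
    rw [← hVu, dot_mulVec_mulVec, herm_transpose hV.1, hVV, quad_expand]
  have h2 : (S *ᵥ u) ⬝ᵥ (S *ᵥ u) = x ⬝ᵥ V⁻¹ *ᵥ x := by
    rw [dot_mulVec_mulVec, hSsym, hSS, hVu, ← hu, dotProduct_comm]
  rw [h1, ← h2]
  exact quad_le_norm V (S *ᵥ u)

end Aux

set_option maxHeartbeats 1600000

/-- **Perturbation lemma.** If `DᵀD ⪯ r·V⁻¹` with `V ≻ 0` and `r > 0`, then for any
positive semidefinite `P` and any `μ ≥ r + 2‖X‖·‖V‖^{1/2}·r^{1/2}`, the two-sided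
Loewner bound `−μ·tr(P)·V⁻¹ ⪯ (X+D)ᵀP(X+D) − XᵀPX ⪯ μ·tr(P)·V⁻¹` holds.
Norms are spectral (ℓ²-operator) norms. -/
theorem perturbation_lemma {p q : ℕ}
    (X D : Matrix (Fin p) (Fin q) ℝ) (V : Matrix (Fin q) (Fin q) ℝ) (r : ℝ)
    (hV : V.PosDef) (hr : 0 < r)
    (hD : (r • V⁻¹ - Dᵀ * D).PosSemidef)
    (P : Matrix (Fin p) (Fin p) ℝ) (hP : P.PosSemidef)
    (μ : ℝ) (hμ : r + 2 * ‖X‖ * Real.sqrt ‖V‖ * Real.sqrt r ≤ μ) :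
    ((X + D)ᵀ * P * (X + D) - Xᵀ * P * X + (μ * P.trace) • V⁻¹).PosSemidef ∧
      ((μ * P.trace) • V⁻¹ - ((X + D)ᵀ * P * (X + D) - Xᵀ * P * X)).PosSemidef := by
  classical
  set t := P.trace with ht
  have ht0 : 0 ≤ t := psd_trace_nonneg hP
  have hVinv : (V⁻¹).PosDef := hV.inv
  have hermA : ∀ (A : Matrix (Fin p) (Fin q) ℝ), (Aᵀ * P * A).IsHermitian := by
    intro A
    have hA : Aᵀ = Aᴴ := (conjTranspose_eq_transpose_of_trivial A).symm
    rw [hA]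
    exact isHermitian_conjTranspose_mul_mul A hP.1
  have hermP : ((X + D)ᵀ * P * (X + D) - Xᵀ * P * X).IsHermitian :=
    (hermA (X + D)).sub (hermA X)
  have hermS : ((μ * t) • V⁻¹).IsHermitian := by
    simp only [Matrix.IsHermitian, conjTranspose_smul, star_trivial]
    rw [conjTranspose_eq_transpose_of_trivial, herm_transpose hVinv.1]
  have hq : ∀ y, y ⬝ᵥ ((X + D)ᵀ * P * (X + D) - Xᵀ * P * X) *ᵥ y
      = (D *ᵥ y) ⬝ᵥ P *ᵥ (D *ᵥ y) + 2 * ((X *ᵥ y) ⬝ᵥ P *ᵥ (D *ᵥ y)) := by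
    intro y
    rw [sub_mulVec, dotProduct_sub, quad_expand, quad_expand, add_mulVec, mulVec_add,
      dotProduct_add, add_dotProduct, add_dotProduct,
      quad_sym hP.1 (D *ᵥ y) (X *ᵥ y)]
    ring
  have main : ∀ y : Fin q → ℝ,
      -((μ * t) * (y ⬝ᵥ V⁻¹ *ᵥ y)) ≤
        (D *ᵥ y) ⬝ᵥ P *ᵥ (D *ᵥ y) + 2 * ((X *ᵥ y) ⬝ᵥ P *ᵥ (D *ᵥ y)) ∧
      (D *ᵥ y) ⬝ᵥ P *ᵥ (D *ᵥ y) + 2 * ((X *ᵥ y) ⬝ᵥ P *ᵥ (D *ᵥ y)) ≤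
        (μ * t) * (y ⬝ᵥ V⁻¹ *ᵥ y) := by
    intro y
    set u := X *ᵥ y with hudef
    set v := D *ᵥ y with hvdef
    set Q := y ⬝ᵥ V⁻¹ *ᵥ y with hQdef
    have hQ0 : 0 ≤ Q := by simpa using hVinv.posSemidef.dotProduct_mulVec_nonneg y
    have ha0 : 0 ≤ u ⬝ᵥ P *ᵥ u := by simpa using hP.dotProduct_mulVec_nonneg u
    have hb0 : 0 ≤ v ⬝ᵥ P *ᵥ v := by simpa using hP.dotProduct_mulVec_nonneg v
    have hvv : v ⬝ᵥ v ≤ r * Q := by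
      have h := hD.dotProduct_mulVec_nonneg y
      simp only [star_trivial] at h
      rw [sub_mulVec, dotProduct_sub, smul_mulVec, dotProduct_smul, smul_eq_mul,
        ← dot_mulVec_mulVec] at h
      rw [hvdef, hQdef]
      linarith
    have hb : v ⬝ᵥ P *ᵥ v ≤ t * (r * Q) :=
      (psd_quad_le_trace hP v).trans (mul_le_mul_of_nonneg_left hvv ht0)
    have hxx : y ⬝ᵥ y ≤ ‖V‖ * Q := dot_le_norm_inv_quad hV y
    have huu : u ⬝ᵥ u ≤ ‖X‖ ^ 2 * (‖V‖ * Q) :=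
      (mulVec_dot_le X y).trans (mul_le_mul_of_nonneg_left hxx (by positivity))
    have ha : u ⬝ᵥ P *ᵥ u ≤ t * (‖X‖ ^ 2 * (‖V‖ * Q)) :=
      (psd_quad_le_trace hP u).trans (mul_le_mul_of_nonneg_left huu ht0)
    have hc2 : (u ⬝ᵥ P *ᵥ v) ^ 2 ≤ (u ⬝ᵥ P *ᵥ u) * (v ⬝ᵥ P *ᵥ v) := psd_cs hP u v
    set s : ℝ := Real.sqrt ‖V‖ * Real.sqrt r with hs
    have hs0 : 0 ≤ s := mul_nonneg (Real.sqrt_nonneg _) (Real.sqrt_nonneg _)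
    have hs2 : s ^ 2 = ‖V‖ * r := by
      rw [hs, mul_pow, Real.sq_sqrt (norm_nonneg V), Real.sq_sqrt hr.le]
    have hK0 : 0 ≤ t * (‖X‖ * s) * Q := by positivity
    have heq : (t * (‖X‖ * s) * Q) ^ 2 = (t * (‖X‖ ^ 2 * (‖V‖ * Q))) * (t * (r * Q)) := by
      linear_combination (t ^ 2 * ‖X‖ ^ 2 * Q ^ 2) * hs2
    have hcK : (u ⬝ᵥ P *ᵥ v) ^ 2 ≤ (t * (‖X‖ * s) * Q) ^ 2 := by
      rw [heq]
      exact hc2.trans (mul_le_mul ha hb hb0 (by positivity))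
    have hcu : u ⬝ᵥ P *ᵥ v ≤ t * (‖X‖ * s) * Q := by nlinarith [hcK, hK0]
    have hcl : -(t * (‖X‖ * s) * Q) ≤ u ⬝ᵥ P *ᵥ v := by nlinarith [hcK, hK0]
    have hμ' : r + 2 * ‖X‖ * s ≤ μ := by
      rw [hs]; linarith [hμ, mul_assoc (2 * ‖X‖) (Real.sqrt ‖V‖) (Real.sqrt r)]
    have hμQ : (r + 2 * ‖X‖ * s) * (t * Q) ≤ μ * (t * Q) :=
      mul_le_mul_of_nonneg_right hμ' (mul_nonneg ht0 hQ0)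
    have hrtQ : 0 ≤ r * (t * Q) := by positivity
    constructor
    · nlinarith [hb0, hcl, hμQ, hrtQ]
    · nlinarith [hb, hcu, hμQ]
  refine ⟨PosSemidef.of_dotProduct_mulVec_nonneg (hermP.add hermS) fun x => ?_,
    PosSemidef.of_dotProduct_mulVec_nonneg (hermS.sub hermP) fun x => ?_⟩
  · have h := (main x).1
    simp only [star_trivial]
    rw [add_mulVec, dotProduct_add, hq x, smul_mulVec, dotProduct_smul, smul_eq_mul]
    linarith
  · have h := (main x).2
    simp only [star_trivial]
    rw [sub_mulVec, dotProduct_sub, hq x, smul_mulVec, dotProduct_smul, smul_eq_mul]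
    linarith
end

section
/- For every positive definite d×d real matrix M and every vector z ∈ ℝ^d, min{zᵀM⁻¹z, 1} ≤ 2·log(det(z zᵀ + M) / det(M)). -/
open Matrix

/-- For every positive definite `d×d` real matrix `M` and every `z ∈ ℝ^d`,
`min{zᵀM⁻¹z, 1} ≤ 2·log(det(z zᵀ + M) / det M)`. -/
theorem min_quadform_le_two_log_det {d : ℕ}
    (M : Matrix (Fin d) (Fin d) ℝ) (hM : M.PosDef) (z : Fin d → ℝ) :
    min (z ⬝ᵥ M⁻¹ *ᵥ z) 1 ≤ 2 * Real.log ((vecMulVec z z + M).det / M.det) := by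
  set s : ℝ := z ⬝ᵥ M⁻¹ *ᵥ z with hs
  have hsnn : 0 ≤ s := by
    have := hM.inv.posSemidef.re_dotProduct_nonneg z
    simpa [hs] using this
  have hdet : (vecMulVec z z + M).det = M.det * (1 + s) := by
    rw [vecMulVec_eq Unit z z, add_comm,
      det_add_replicateCol_mul_replicateRow (isUnit_iff_ne_zero.2 hM.det_pos.ne') z z]
    congr 1
    rw [det_unique]
    simp only [Matrix.add_apply, Matrix.one_apply_eq, Matrix.mul_apply, Matrix.replicateRow_apply,
      Matrix.replicateCol_apply, hs, dotProduct, Matrix.mulVec, Finset.sum_mul, Finset.mul_sum]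
    congr 1
    rw [Finset.sum_comm]
    exact Finset.sum_congr rfl fun i _ => Finset.sum_congr rfl fun x _ => by ring
  have hMdet : 0 < M.det := hM.det_pos
  have hratio : (vecMulVec z z + M).det / M.det = 1 + s := by
    rw [hdet]; field_simp
  rw [hratio]
  have hlog : 1 - (1 + s)⁻¹ ≤ Real.log (1 + s) :=
    Real.one_sub_inv_le_log_of_pos (by linarith)
  have h1s : (0:ℝ) < 1 + s := by linarith
  rcases le_total s 1 with h | h
  · have : min s 1 = s := min_eq_left h
    rw [this]
    have key : s ≤ 2 * (1 - (1 + s)⁻¹) := by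
      have h2 : (1 + s)⁻¹ * (1 + s) = 1 := inv_mul_cancel₀ (ne_of_gt h1s)
      nlinarith [h2]
    linarith
  · have : min s 1 = 1 := min_eq_right h
    rw [this]
    have key : (1:ℝ) ≤ 2 * (1 - (1 + s)⁻¹) := by
      have h2 : (1 + s)⁻¹ * (1 + s) = 1 := inv_mul_cancel₀ (ne_of_gt h1s)
      nlinarith [h2, inv_pos.2 h1s]
    linarith
end

section
/- Let K be a real m×n matrix with ‖K‖ ≤ κ for some κ ≥ 1, and let a ≥ 1 be a real number. Then the (n+m)×(n+m) symmetric block matrix [[a·Iₙ, a·Kᵀ], [a·K, a·K Kᵀ + 2κ²·Iₘ]] is bounded below in the Loewner order by (1/2)·I_{n+m}. -/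
open Matrix
open scoped Matrix.Norms.L2Operator

/-- If `‖K‖ ≤ κ` (spectral norm) with `κ ≥ 1` and `a ≥ 1`, then the symmetric block matrix
`[[a·Iₙ, a·Kᵀ], [a·K, a·K Kᵀ + 2κ²·Iₘ]]` is bounded below by `(1/2)·I_{n+m}` in the
Loewner order. -/
theorem block_matrix_loewner_lower_bound {n m : ℕ}
    (K : Matrix (Fin m) (Fin n) ℝ) (κ a : ℝ)
    (hκ : 1 ≤ κ) (hK : ‖K‖ ≤ κ) (ha : 1 ≤ a) :
    (fromBlocks (a • (1 : Matrix (Fin n) (Fin n) ℝ)) (a • Kᵀ)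
        (a • K) (a • (K * Kᵀ) + (2 * κ ^ 2) • (1 : Matrix (Fin m) (Fin m) ℝ)) -
      (1 / 2 : ℝ) • (1 : Matrix (Fin n ⊕ Fin m) (Fin n ⊕ Fin m) ℝ)).PosSemidef := by
  refine Matrix.PosSemidef.of_dotProduct_mulVec_nonneg ?_ ?_
  · apply Matrix.IsHermitian.sub
    · rw [Matrix.isHermitian_fromBlocks_iff]
      refine ⟨?_, ?_, ?_, ?_⟩ <;>
        simp [Matrix.IsHermitian, Matrix.conjTranspose_eq_transpose_of_trivial,
          Matrix.transpose_smul, Matrix.transpose_mul, Matrix.transpose_add,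
          smul_add, mul_comm]
    · simp [Matrix.IsHermitian, Matrix.conjTranspose_eq_transpose_of_trivial,
        Matrix.transpose_smul]
  · intro x
    set u : Fin n → ℝ := x ∘ Sum.inl with hu
    set y : Fin m → ℝ := x ∘ Sum.inr with hy
    set v : Fin n → ℝ := Kᵀ *ᵥ y with hv
    -- key norm bound
    have hr : v ⬝ᵥ v ≤ κ ^ 2 * (y ⬝ᵥ y) := by
      set y' : EuclideanSpace ℝ (Fin m) := (WithLp.equiv 2 _).symm y with hy'
      have h1 : ‖(EuclideanSpace.equiv (Fin n) ℝ).symm (Kᵀ *ᵥ y')‖ ≤ κ * ‖y'‖ := by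
        refine (Matrix.l2_opNorm_mulVec Kᵀ y').trans ?_
        apply mul_le_mul_of_nonneg_right _ (norm_nonneg _)
        calc ‖Kᵀ‖ = ‖Kᴴ‖ := by rw [Matrix.conjTranspose_eq_transpose_of_trivial]
          _ = ‖K‖ := Matrix.l2_opNorm_conjTranspose K
          _ ≤ κ := hK
      have hvy : (Kᵀ *ᵥ y' : Fin n → ℝ) = v := by
        rw [hv, hy']; rfl
      have hz : ∀ (k : ℕ) (w : Fin k → ℝ),
          ‖(EuclideanSpace.equiv (Fin k) ℝ).symm w‖ ^ 2 = w ⬝ᵥ w := by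
        intro k w
        rw [EuclideanSpace.norm_eq, Real.sq_sqrt (by positivity)]
        simp [dotProduct, sq]
      have hvn : v ⬝ᵥ v = ‖(EuclideanSpace.equiv (Fin n) ℝ).symm (Kᵀ *ᵥ y')‖ ^ 2 := by
        rw [hz n (Kᵀ *ᵥ y'), hvy]
      have hyn : y ⬝ᵥ y = ‖y'‖ ^ 2 := by
        rw [show y' = (EuclideanSpace.equiv (Fin m) ℝ).symm y from rfl, hz m y]
      rw [hvn, hyn, ← mul_pow]
      exact pow_le_pow_left₀ (norm_nonneg _) h1 2
    have hx : x = Sum.elim u y := (Sum.elim_comp_inl_inr x).symm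
    have hsx : star x = x := by simp
    rw [hsx, hx, Matrix.sub_mulVec, Matrix.fromBlocks_mulVec]
    have hq : y ⬝ᵥ (K *ᵥ u) = u ⬝ᵥ v := by
      rw [hv, Matrix.mulVec_transpose, Matrix.dotProduct_mulVec, dotProduct_comm]
    have hrr : y ⬝ᵥ ((K * Kᵀ) *ᵥ y) = v ⬝ᵥ v := by
      rw [← Matrix.mulVec_mulVec, Matrix.dotProduct_mulVec, ← Matrix.mulVec_transpose, hv]
    have h2 : (0:ℝ) ≤ (u + v) ⬝ᵥ (u + v) := by
      have := dotProduct_star_self_nonneg (u + v)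
      simpa using this
    have h3 : (0:ℝ) ≤ (u + (2:ℝ) • v) ⬝ᵥ (u + (2:ℝ) • v) := by
      have := dotProduct_star_self_nonneg (u + (2:ℝ) • v)
      simpa using this
    have hs : (0:ℝ) ≤ y ⬝ᵥ y := by
      have := dotProduct_star_self_nonneg y; simpa using this
    have hp : (0:ℝ) ≤ u ⬝ᵥ u := by
      have := dotProduct_star_self_nonneg u; simpa using this
    simp only [Sum.elim_comp_inl, Sum.elim_comp_inr, Matrix.smul_mulVec,
      Matrix.one_mulVec, Matrix.add_mulVec, dotProduct_sub, dotProduct_add,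
      dotProduct_smul, sumElim_dotProduct_sumElim, smul_eq_mul, hq, hrr]
    rw [show u ⬝ᵥ (Kᵀ *ᵥ y) = u ⬝ᵥ v from rfl]
    have e2 : (u + v) ⬝ᵥ (u + v) = u ⬝ᵥ u + 2 * (u ⬝ᵥ v) + v ⬝ᵥ v := by
      simp [dotProduct_add, add_dotProduct, dotProduct_comm v u]; ring
    have e3 : (u + (2:ℝ) • v) ⬝ᵥ (u + (2:ℝ) • v) = u ⬝ᵥ u + 4 * (u ⬝ᵥ v) + 4 * (v ⬝ᵥ v) := by
      simp [dotProduct_add, add_dotProduct, dotProduct_smul, smul_dotProduct,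
        dotProduct_comm v u, smul_eq_mul]; ring
    rw [e2] at h2; rw [e3] at h3
    nlinarith [mul_nonneg (sub_nonneg.2 ha) h2, mul_nonneg (sub_nonneg.2 hκ) hs,
      sq_nonneg κ, mul_le_mul_of_nonneg_right (by nlinarith : (1:ℝ) ≤ κ^2) hs]
end

section
/- Let d ≥ 1, let 0 < λ₁ ≤ λ_T, let Z ≥ 0, let z₁, …, z_T ∈ ℝ^d satisfy ‖z_t‖² ≤ Z for every t, and let N be a natural number such that 2^N·λ₁^d ≤ det(λ_T·I_d + Σ_{t=1}^T z_t z_tᵀ). Then N ≤ d·log₂((λ_T + Z·T)/λ₁). -/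
open Matrix

lemma dot_vecMulVec_aux {d : ℕ} (w x : Fin d → ℝ) :
    x ⬝ᵥ ((vecMulVec w w) *ᵥ x) = (w ⬝ᵥ x) ^ 2 := by
  have h : ∀ i, (vecMulVec w w *ᵥ x) i = w i * (w ⬝ᵥ x) := by
    intro i
    simp [mulVec, vecMulVec_apply, dotProduct, Finset.mul_sum, mul_assoc]
  calc x ⬝ᵥ ((vecMulVec w w) *ᵥ x) = ∑ i, x i * (w i * (w ⬝ᵥ x)) := by
        simp [dotProduct, h]
    _ = (∑ i, x i * w i) * (w ⬝ᵥ x) := by rw [Finset.sum_mul]; congr 1; ext i; ring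
    _ = (w ⬝ᵥ x) ^ 2 := by
        rw [show (∑ i, x i * w i) = w ⬝ᵥ x from by simp [dotProduct, mul_comm]]; ring

lemma dotProduct_eq_inner_aux {d : ℕ} (x y : EuclideanSpace ℝ (Fin d)) :
    (x : Fin d → ℝ) ⬝ᵥ (y : Fin d → ℝ) = inner ℝ x y := by
  simp [dotProduct, PiLp.inner_apply, mul_comm]

/-- If `d ≥ 1`, `0 < λ₁ ≤ λ_T`, `Z ≥ 0`, `‖z_t‖² ≤ Z` for all `t`, and
`2^N·λ₁^d ≤ det(λ_T·I_d + Σ_t z_t z_tᵀ)`, then `N ≤ d·log₂((λ_T + Z·T)/λ₁)`.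
(Bound on the number of policy switches under the determinant-doubling criterion.) -/
theorem switch_count_bound {d T : ℕ} (hd : 1 ≤ d)
    (lam₁ lamT Z : ℝ) (hlam₁ : 0 < lam₁) (hlam : lam₁ ≤ lamT) (hZ : 0 ≤ Z)
    (z : Fin T → EuclideanSpace ℝ (Fin d)) (hz : ∀ t, ‖z t‖ ^ 2 ≤ Z)
    (N : ℕ)
    (hN : 2 ^ N * lam₁ ^ d ≤
      (lamT • (1 : Matrix (Fin d) (Fin d) ℝ) + ∑ t : Fin T, vecMulVec (z t) (z t)).det) :
    (N : ℝ) ≤ d * Real.logb 2 ((lamT + Z * T) / lam₁) := by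
  set M : Matrix (Fin d) (Fin d) ℝ :=
    lamT • (1 : Matrix (Fin d) (Fin d) ℝ) + ∑ t : Fin T, vecMulVec (z t) (z t) with hMdef
  set c : ℝ := lamT + Z * T with hc
  have hlamT : 0 < lamT := lt_of_lt_of_le hlam₁ hlam
  have hc1 : lam₁ ≤ c := le_add_of_le_of_nonneg hlam (by positivity)
  have hc0 : 0 < c := lt_of_lt_of_le hlam₁ hc1
  -- quadratic form of M
  have hquad : ∀ x : Fin d → ℝ,
      x ⬝ᵥ (M *ᵥ x) = lamT * (x ⬝ᵥ x) + ∑ t : Fin T, ((z t : Fin d → ℝ) ⬝ᵥ x) ^ 2 := by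
    intro x
    have hsum : (∑ t : Fin T, vecMulVec (z t) (z t)) *ᵥ x
        = ∑ t : Fin T, (vecMulVec (z t) (z t)) *ᵥ x := by
      ext i
      simp only [mulVec, dotProduct, Matrix.sum_apply, Finset.sum_apply, Finset.sum_mul]
      exact Finset.sum_comm
    have hdotsum : ∀ f : Fin T → Fin d → ℝ, x ⬝ᵥ (∑ t, f t) = ∑ t, x ⬝ᵥ f t := by
      intro f
      simp only [dotProduct, Finset.sum_apply, Finset.mul_sum]
      exact Finset.sum_comm
    rw [hMdef, add_mulVec, dotProduct_add, smul_mulVec, one_mulVec, dotProduct_smul,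
      hsum, hdotsum]
    simp only [smul_eq_mul]
    congr 1
    exact Finset.sum_congr rfl fun t _ => dot_vecMulVec_aux _ _
  have hHerm : M.IsHermitian := by
    show Mᴴ = M
    ext i j
    simp only [hMdef, conjTranspose_apply, Matrix.add_apply, Matrix.smul_apply,
      Matrix.sum_apply, Matrix.one_apply, vecMulVec_apply, star_trivial, smul_eq_mul]
    rw [show ((if j = i then (1:ℝ) else 0)) = (if i = j then (1:ℝ) else 0) from by
      simp [eq_comm]]
    congr 1
    exact Finset.sum_congr rfl fun t _ => mul_comm _ _
  have hMpsd : M.PosSemidef := by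
    refine .of_dotProduct_mulVec_nonneg hHerm fun x => ?_
    rw [star_trivial, hquad]
    have h1 : (0:ℝ) ≤ x ⬝ᵥ x := Finset.sum_nonneg fun i _ => mul_self_nonneg _
    exact add_nonneg (mul_nonneg hlamT.le h1)
      (Finset.sum_nonneg fun t _ => sq_nonneg _)
  -- each eigenvalue is at most c
  have heig : ∀ i, hHerm.eigenvalues i ≤ c := by
    intro i
    set v : EuclideanSpace ℝ (Fin d) := hHerm.eigenvectorBasis i with hv
    have hv1 : ‖v‖ = 1 := hHerm.eigenvectorBasis.orthonormal.1 i
    have hvv : (v : Fin d → ℝ) ⬝ᵥ (v : Fin d → ℝ) = 1 := by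
      rw [dotProduct_eq_inner_aux, real_inner_self_eq_norm_sq, hv1]; norm_num
    have hCS : ∀ t, ((z t : Fin d → ℝ) ⬝ᵥ (v : Fin d → ℝ)) ^ 2 ≤ Z := by
      intro t
      have h := real_inner_mul_inner_self_le (z t) v
      rw [real_inner_self_eq_norm_sq, real_inner_self_eq_norm_sq, hv1] at h
      rw [dotProduct_eq_inner_aux, sq]
      calc inner ℝ (z t) v * inner ℝ (z t) v ≤ ‖z t‖ ^ 2 * 1 ^ 2 := h
        _ = ‖z t‖ ^ 2 := by ring
        _ ≤ Z := hz t
    have hform : hHerm.eigenvalues i = (v : Fin d → ℝ) ⬝ᵥ (M *ᵥ (v : Fin d → ℝ)) := by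
      simpa [star_trivial] using hHerm.eigenvalues_eq i
    rw [hform, hquad, hvv, mul_one, hc]
    have hTbound : ∑ t : Fin T, ((z t : Fin d → ℝ) ⬝ᵥ (v : Fin d → ℝ)) ^ 2 ≤ Z * T := by
      calc ∑ t : Fin T, ((z t : Fin d → ℝ) ⬝ᵥ (v : Fin d → ℝ)) ^ 2
          ≤ ∑ _t : Fin T, Z := Finset.sum_le_sum fun t _ => hCS t
        _ = Z * T := by simp [mul_comm]
    linarith
  -- determinant bound
  have hdet : M.det ≤ c ^ d := by
    have hdeq : M.det = ∏ i, hHerm.eigenvalues i := by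
      simpa using hHerm.det_eq_prod_eigenvalues
    rw [hdeq]
    calc ∏ i, hHerm.eigenvalues i ≤ ∏ _i : Fin d, c :=
          Finset.prod_le_prod (fun i _ => hMpsd.eigenvalues_nonneg i) (fun i _ => heig i)
      _ = c ^ d := by simp
  have hpow : (2:ℝ) ^ N ≤ (c / lam₁) ^ d := by
    rw [div_pow, le_div_iff₀ (by positivity)]
    exact le_trans hN hdet
  calc (N : ℝ) = Real.logb 2 ((2:ℝ) ^ N) := by
        rw [Real.logb_pow, Real.logb_self_eq_one (by norm_num)]; ring
    _ ≤ Real.logb 2 ((c / lam₁) ^ d) :=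
        Real.logb_le_logb_of_le (by norm_num) (by positivity) hpow
    _ = d * Real.logb 2 (c / lam₁) := Real.logb_pow _ _ _
end

section
/- Let P₁ and P₂ be positive definite n×n real matrices, let α₀ > 0 and γ > 0, and suppose P₂ ⪰ (α₀/2)·I and P₁ ⪯ P₂ + (γ·α₀/2)·I. Then ‖P₂^{−1/2} P₁^{1/2}‖² ≤ 1 + γ, and consequently ‖P₂^{−1/2} P₁^{1/2}‖ ≤ 1 + γ/2. -/
open Matrix
open scoped Matrix.Norms.L2Operator

/-- The positive semidefinite square root, as `Matrix.PosSemidef.sqrt` was defined in the older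
Mathlib (removed since). -/
noncomputable def Matrix.PosSemidef.sqrt {n : Type*} [Fintype n] [DecidableEq n]
    {A : Matrix n n ℝ} (hA : A.PosSemidef) : Matrix n n ℝ :=
  hA.1.eigenvectorUnitary.1 * diagonal ((↑) ∘ (√·) ∘ hA.1.eigenvalues) *
    (star hA.1.eigenvectorUnitary : Matrix n n ℝ)

private lemma Matrix.PosSemidef.posSemidef_sqrt {n : Type*} [Fintype n] [DecidableEq n]
    {A : Matrix n n ℝ} (hA : A.PosSemidef) : hA.sqrt.PosSemidef := by
  unfold Matrix.PosSemidef.sqrt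
  have hd : (diagonal ((↑) ∘ (√·) ∘ hA.1.eigenvalues) : Matrix n n ℝ).PosSemidef :=
    PosSemidef.diagonal (fun i => by simp [Real.sqrt_nonneg])
  have := hd.mul_mul_conjTranspose_same (hA.1.eigenvectorUnitary : Matrix n n ℝ)
  rwa [Matrix.star_eq_conjTranspose]

private lemma Matrix.PosSemidef.sqrt_mul_self {n : Type*} [Fintype n] [DecidableEq n]
    {A : Matrix n n ℝ} (hA : A.PosSemidef) : hA.sqrt * hA.sqrt = A := by
  conv_rhs => rw [hA.1.spectral_theorem, Unitary.conjStarAlgAut_apply]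
  unfold Matrix.PosSemidef.sqrt
  have hU : (star hA.1.eigenvectorUnitary : Matrix n n ℝ) * hA.1.eigenvectorUnitary.1 = 1 :=
    Unitary.coe_star_mul_self _
  have e : ∀ a b c d e f : Matrix n n ℝ, a * b * c * (d * e * f) = a * (b * (c * d) * e) * f := by
    intros; simp only [mul_assoc]
  rw [e, hU, mul_one, diagonal_mul_diagonal]
  congr 2
  congr 1
  funext i
  simp [Real.mul_self_sqrt (hA.eigenvalues_nonneg i)]

private lemma smul_posSemidef {n : ℕ} {M : Matrix (Fin n) (Fin n) ℝ} (hM : M.PosSemidef)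
    {c : ℝ} (hc : 0 ≤ c) : (c • M).PosSemidef := by
  exact hM.smul hc

private lemma norm_le_sqrt_aux {n : ℕ} (A : Matrix (Fin n) (Fin n) ℝ) (c : ℝ) (hc : 0 ≤ c)
    (h : (c • (1 : Matrix (Fin n) (Fin n) ℝ) - Aᴴ * A).PosSemidef) :
    ‖A‖ ≤ Real.sqrt c := by
  rw [Matrix.l2_opNorm_def]
  refine ContinuousLinearMap.opNorm_le_bound _ (Real.sqrt_nonneg c) fun x => ?_
  set v : Fin n → ℝ := (WithLp.equiv 2 (Fin n → ℝ)) x with hv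
  have hxnorm : ‖x‖ ^ 2 = v ⬝ᵥ v := by
    rw [EuclideanSpace.norm_eq, Real.sq_sqrt (by positivity)]
    simp only [Real.norm_eq_abs, sq_abs]
    simp only [dotProduct, pow_two]
    rfl
  have happ : ((Matrix.toEuclideanLin.trans LinearMap.toContinuousLinearMap) A) x =
      (WithLp.equiv 2 (Fin n → ℝ)).symm (A *ᵥ v) := by
    simp [Matrix.toEuclideanLin_apply, hv]
  rw [happ]
  have hAx : ‖(WithLp.equiv 2 (Fin n → ℝ)).symm (A *ᵥ v)‖ ^ 2 =
      (A *ᵥ v) ⬝ᵥ (A *ᵥ v) := by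
    rw [EuclideanSpace.norm_eq, Real.sq_sqrt (by positivity)]
    simp only [Real.norm_eq_abs, sq_abs]
    simp only [dotProduct, pow_two]
    rfl
  have hquad : v ⬝ᵥ ((Aᴴ * A) *ᵥ v) = (A *ᵥ v) ⬝ᵥ (A *ᵥ v) := by
    rw [Matrix.conjTranspose_eq_transpose_of_trivial, ← Matrix.mulVec_mulVec,
      Matrix.dotProduct_mulVec, Matrix.vecMul_transpose]
  have hpsd := h.dotProduct_mulVec_nonneg v
  rw [Matrix.sub_mulVec, Matrix.smul_mulVec, Matrix.one_mulVec,
    dotProduct_sub, dotProduct_smul, star_trivial, smul_eq_mul, sub_nonneg] at hpsd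
  have key : ‖(WithLp.equiv 2 (Fin n → ℝ)).symm (A *ᵥ v)‖ ^ 2 ≤ c * ‖x‖ ^ 2 := by
    rw [hAx, ← hquad, hxnorm]; exact hpsd
  have e1 : ‖(WithLp.equiv 2 (Fin n → ℝ)).symm (A *ᵥ v)‖ =
      Real.sqrt (‖(WithLp.equiv 2 (Fin n → ℝ)).symm (A *ᵥ v)‖ ^ 2) :=
    (Real.sqrt_sq (norm_nonneg _)).symm
  have e3 : Real.sqrt (c * ‖x‖ ^ 2) = Real.sqrt c * ‖x‖ := by
    rw [Real.sqrt_mul hc, Real.sqrt_sq (norm_nonneg x)]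
  rw [e1]
  exact (Real.sqrt_le_sqrt key).trans_eq e3

/-- If `P₂ ⪰ (α₀/2)·I` and `P₁ ⪯ P₂ + (γ·α₀/2)·I` for positive definite `P₁, P₂`, then
`‖P₂^{−1/2} P₁^{1/2}‖² ≤ 1 + γ`, hence `‖P₂^{−1/2} P₁^{1/2}‖ ≤ 1 + γ/2`
(spectral norms, `P^{1/2}` the positive definite square root). -/
theorem sequential_stability_norm_bound {n : ℕ}
    (P₁ P₂ : Matrix (Fin n) (Fin n) ℝ) (α₀ γ : ℝ)
    (hα₀ : 0 < α₀) (hγ : 0 < γ)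
    (hP₁ : P₁.PosDef) (hP₂ : P₂.PosDef)
    (hlow : (P₂ - (α₀ / 2) • (1 : Matrix (Fin n) (Fin n) ℝ)).PosSemidef)
    (hclose : (P₂ + (γ * α₀ / 2) • (1 : Matrix (Fin n) (Fin n) ℝ) - P₁).PosSemidef) :
    ‖(hP₂.posSemidef.sqrt)⁻¹ * hP₁.posSemidef.sqrt‖ ^ 2 ≤ 1 + γ ∧
      ‖(hP₂.posSemidef.sqrt)⁻¹ * hP₁.posSemidef.sqrt‖ ≤ 1 + γ / 2 := by
  set S₁ := hP₁.posSemidef.sqrt with hS₁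
  set S₂ := hP₂.posSemidef.sqrt with hS₂
  set B := S₂⁻¹ with hB
  have hS₂sq : S₂ * S₂ = P₂ := hP₂.posSemidef.sqrt_mul_self
  have hS₁sq : S₁ * S₁ = P₁ := hP₁.posSemidef.sqrt_mul_self
  have hdet : IsUnit S₂.det := by
    have hd : S₂.det * S₂.det = P₂.det := by rw [← Matrix.det_mul, hS₂sq]
    have hpos : 0 < P₂.det := hP₂.det_pos
    refine isUnit_iff_ne_zero.mpr fun h0 => ?_
    rw [h0, mul_zero] at hd
    exact hpos.ne' hd.symm
  have hBS : B * S₂ = 1 := Matrix.nonsing_inv_mul _ hdet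
  have hSB : S₂ * B = 1 := Matrix.mul_nonsing_inv _ hdet
  have hS₂herm : S₂ᴴ = S₂ := hP₂.posSemidef.posSemidef_sqrt.1
  have hS₁herm : S₁ᴴ = S₁ := hP₁.posSemidef.posSemidef_sqrt.1
  have hBherm : Bᴴ = B := by
    rw [hB, Matrix.conjTranspose_eq_transpose_of_trivial, Matrix.transpose_nonsing_inv,
      ← Matrix.conjTranspose_eq_transpose_of_trivial, hS₂herm]
  have hM : ((1 + γ) • P₂ - P₁).PosSemidef := by
    have h1 := hclose.add (smul_posSemidef hlow hγ.le)
    have heq : P₂ + (γ * α₀ / 2) • (1 : Matrix (Fin n) (Fin n) ℝ) - P₁ +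
        γ • (P₂ - (α₀ / 2) • (1 : Matrix (Fin n) (Fin n) ℝ)) = (1 + γ) • P₂ - P₁ := by
      rw [smul_sub, smul_smul, add_smul, one_smul]
      module
    rwa [heq] at h1
  have hconj : ((1 + γ) • (1 : Matrix (Fin n) (Fin n) ℝ) - B * P₁ * B).PosSemidef := by
    have h2 := hM.mul_mul_conjTranspose_same B
    rw [hBherm] at h2
    have hBP₂B : B * P₂ * B = 1 := by
      calc B * P₂ * B = (B * S₂) * (S₂ * B) := by rw [← hS₂sq]; noncomm_ring
        _ = 1 := by rw [hBS, hSB, one_mul]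
    have heq : B * ((1 + γ) • P₂ - P₁) * B =
        (1 + γ) • (1 : Matrix (Fin n) (Fin n) ℝ) - B * P₁ * B := by
      rw [Matrix.mul_sub, Matrix.sub_mul, Matrix.mul_smul, Matrix.smul_mul, hBP₂B]
    rwa [heq] at h2
  have hAAH : (B * S₁)ᴴᴴ * (B * S₁)ᴴ = B * P₁ * B := by
    rw [conjTranspose_conjTranspose, Matrix.conjTranspose_mul, hS₁herm, hBherm, ← hS₁sq]
    noncomm_ring
  have hnorm : ‖(B * S₁)ᴴ‖ ≤ Real.sqrt (1 + γ) := by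
    apply norm_le_sqrt_aux _ _ (by linarith)
    rwa [hAAH]
  have hmain : ‖B * S₁‖ ≤ Real.sqrt (1 + γ) := by
    rwa [Matrix.l2_opNorm_conjTranspose] at hnorm
  have hsq : ‖B * S₁‖ ^ 2 ≤ 1 + γ := by
    have h3 := pow_le_pow_left₀ (norm_nonneg (B * S₁)) hmain 2
    rwa [Real.sq_sqrt (by linarith : (0:ℝ) ≤ 1 + γ)] at h3
  refine ⟨hsq, ?_⟩
  calc ‖B * S₁‖ ≤ Real.sqrt (1 + γ) := hmain
    _ ≤ Real.sqrt ((1 + γ / 2) ^ 2) := Real.sqrt_le_sqrt (by nlinarith)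
    _ = 1 + γ / 2 := Real.sqrt_sq (by linarith)
end

section
/- Let 0 < γ < 1, B₀ > 0, b₀ > 0, κ := B₀/b₀, and let s < t be natural numbers. Suppose H_s, …, H_{t−1} are invertible real n×n matrices and L_s, …, L_{t−1} are real n×n matrices with ‖L_j‖ ≤ 1 − γ for all s ≤ j ≤ t−1, ‖H_{j+1}⁻¹ H_j‖ ≤ 1 + γ/2 for all s ≤ j ≤ t−2, ‖H_{t−1}‖ ≤ B₀, and ‖H_s⁻¹‖ ≤ 1/b₀. Then the ordered product satisfies ‖(H_{t−1} L_{t−1} H_{t−1}⁻¹)·(H_{t−2} L_{t−2} H_{t−2}⁻¹) ⋯ (H_s L_s H_s⁻¹)‖ ≤ κ·(1 − γ/2)^{t−s}. -/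
open Matrix
open scoped Matrix.Norms.L2Operator

/-- Transition-matrix product bound for a `(κ,γ)`-strongly sequentially stable sequence:
if `‖L_j‖ ≤ 1 − γ` for `s ≤ j ≤ t−1`, `‖H_{j+1}⁻¹ H_j‖ ≤ 1 + γ/2` for `s ≤ j ≤ t−2`,
`‖H_{t−1}‖ ≤ B₀` and `‖H_s⁻¹‖ ≤ 1/b₀`, then the ordered product
`(H_{t−1} L_{t−1} H_{t−1}⁻¹)⋯(H_s L_s H_s⁻¹)` has spectral norm at most
`κ·(1 − γ/2)^{t−s}` with `κ = B₀/b₀`. -/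
theorem ordered_product_norm_bound {n : ℕ}
    (γ B₀ b₀ : ℝ) (hγ0 : 0 < γ) (hγ1 : γ < 1) (hB₀ : 0 < B₀) (hb₀ : 0 < b₀)
    (s t : ℕ) (hst : s < t)
    (H L : ℕ → Matrix (Fin n) (Fin n) ℝ)
    (hHinv : ∀ j, s ≤ j → j + 1 ≤ t → IsUnit (H j).det)
    (hL : ∀ j, s ≤ j → j + 1 ≤ t → ‖L j‖ ≤ 1 - γ)
    (hseq : ∀ j, s ≤ j → j + 2 ≤ t → ‖(H (j + 1))⁻¹ * H j‖ ≤ 1 + γ / 2)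
    (hHt : ‖H (t - 1)‖ ≤ B₀) (hHs : ‖(H s)⁻¹‖ ≤ 1 / b₀) :
    ‖((List.range (t - s)).map
        (fun i => H (t - 1 - i) * L (t - 1 - i) * (H (t - 1 - i))⁻¹)).prod‖ ≤
      (B₀ / b₀) * (1 - γ / 2) ^ (t - s) := by
  set M : ℕ → Matrix (Fin n) (Fin n) ℝ := fun j => H j * L j * (H j)⁻¹ with hM
  set P : ℕ → Matrix (Fin n) (Fin n) ℝ :=
    fun u => ((List.range (u + 1 - s)).map (fun i => M (u - i))).prod with hP
  have hγ2 : (0:ℝ) < 1 - γ / 2 := by linarith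
  have hPsucc : ∀ u, s ≤ u → P (u + 1) = M (u + 1) * P u := by
    intro u hu
    have h1 : u + 1 + 1 - s = (u + 1 - s) + 1 := by omega
    have hfun : ∀ i, M (u + 1 - (i + 1)) = M (u - i) := by
      intro i
      have h2 : u + 1 - (i + 1) = u - i := by omega
      rw [h2]
    simp only [hP, h1, List.range_succ_eq_map, List.map_cons, List.map_map, List.prod_cons,
      Nat.sub_zero, Function.comp_def, hfun]
  have key : ∀ u, s ≤ u → u + 1 ≤ t → ‖(H u)⁻¹ * P u‖ ≤ (1 - γ/2) ^ (u + 1 - s) / b₀ := by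
    intro u hu
    induction u, hu using Nat.le_induction with
    | base =>
      intro hlt
      have hPs : P s = H s * L s * (H s)⁻¹ := by
        have h1 : s + 1 - s = 1 := by omega
        simp [hP, hM, h1, List.range_succ]
      have heq : (H s)⁻¹ * P s = L s * (H s)⁻¹ := by
        rw [hPs]
        rw [← Matrix.mul_assoc, ← Matrix.mul_assoc,
          Matrix.nonsing_inv_mul _ (hHinv s le_rfl hlt), Matrix.one_mul]
      rw [heq]
      have h1 : s + 1 - s = 1 := by omega
      rw [h1, pow_one]
      calc ‖L s * (H s)⁻¹‖ ≤ ‖L s‖ * ‖(H s)⁻¹‖ := norm_mul_le _ _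
        _ ≤ (1 - γ) * (1 / b₀) := by
            apply mul_le_mul (hL s le_rfl hlt) hHs (norm_nonneg _) (by linarith)
        _ ≤ (1 - γ / 2) / b₀ := by
            rw [mul_one_div, div_le_div_iff₀ hb₀ hb₀]
            nlinarith
    | succ u hu ih =>
      intro hlt
      have hut : u + 1 ≤ t := by omega
      have heq : (H (u+1))⁻¹ * P (u+1) = L (u+1) * ((H (u+1))⁻¹ * H u) * ((H u)⁻¹ * P u) := by
        rw [hPsucc u hu]
        simp only [hM]
        simp only [← Matrix.mul_assoc]
        rw [Matrix.nonsing_inv_mul _ (hHinv (u+1) (by omega) (by omega)), Matrix.one_mul]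
        simp only [Matrix.mul_assoc]
        rw [← Matrix.mul_assoc (H u), Matrix.mul_nonsing_inv _ (hHinv u hu hut),
          Matrix.one_mul]
      rw [heq]
      have h1 : u + 1 + 1 - s = (u + 1 - s) + 1 := by omega
      rw [h1, pow_succ]
      have hnn : (0:ℝ) ≤ (1 - γ/2) ^ (u + 1 - s) / b₀ := by positivity
      calc ‖L (u+1) * ((H (u+1))⁻¹ * H u) * ((H u)⁻¹ * P u)‖
          ≤ ‖L (u+1) * ((H (u+1))⁻¹ * H u)‖ * ‖(H u)⁻¹ * P u‖ := norm_mul_le _ _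
        _ ≤ (‖L (u+1)‖ * ‖(H (u+1))⁻¹ * H u‖) * ((1 - γ/2) ^ (u + 1 - s) / b₀) := by
            apply mul_le_mul (norm_mul_le _ _) (ih hut) (norm_nonneg _)
            positivity
        _ ≤ ((1 - γ) * (1 + γ/2)) * ((1 - γ/2) ^ (u + 1 - s) / b₀) := by
            apply mul_le_mul_of_nonneg_right _ hnn
            apply mul_le_mul (hL (u+1) (by omega) (by omega)) (hseq u hu (by omega))
              (norm_nonneg _) (by linarith)
        _ ≤ (1 - γ/2) * ((1 - γ/2) ^ (u + 1 - s) / b₀) := by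
            apply mul_le_mul_of_nonneg_right _ hnn
            nlinarith
        _ = (1 - γ/2) ^ (u + 1 - s) * (1 - γ/2) / b₀ := by ring
  -- apply at u = t - 1
  have hts : t - 1 + 1 = t := by omega
  have hkey := key (t - 1) (by omega) (by omega)
  have hPt : ((List.range (t - s)).map
      (fun i => H (t - 1 - i) * L (t - 1 - i) * (H (t - 1 - i))⁻¹)).prod = P (t - 1) := by
    simp only [hP, hM]
    have h3 : t - 1 + 1 - s = t - s := by omega
    rw [h3]
  rw [hPt]
  have hfact : P (t - 1) = H (t - 1) * ((H (t - 1))⁻¹ * P (t - 1)) := by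
    rw [← Matrix.mul_assoc, Matrix.mul_nonsing_inv _ (hHinv (t-1) (by omega) (by omega)),
      Matrix.one_mul]
  rw [hfact]
  have h2 : t - 1 + 1 - s = t - s := by omega
  calc ‖H (t - 1) * ((H (t - 1))⁻¹ * P (t - 1))‖
      ≤ ‖H (t - 1)‖ * ‖(H (t - 1))⁻¹ * P (t - 1)‖ := norm_mul_le _ _
    _ ≤ B₀ * ((1 - γ/2) ^ (t - s) / b₀) := by
        rw [h2] at hkey
        exact mul_le_mul hHt hkey (norm_nonneg _) (le_of_lt hB₀)
    _ = (B₀ / b₀) * (1 - γ/2) ^ (t - s) := by ring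
end

section
/- Let 0 < γ < 1, B₀ > 0, b₀ > 0, κ := B₀/b₀. Let (x_t)_{t≥1} and (ζ_t)_{t≥1} be sequences in ℝⁿ and (M_t)_{t≥1} a sequence of real n×n matrices satisfying x_{t+1} = M_t x_t + ζ_t for all t ≥ 1, where each M_t = H_t L_t H_t⁻¹ with H_t invertible, ‖L_t‖ ≤ 1 − γ, ‖H_t‖ ≤ B₀, ‖H_t⁻¹‖ ≤ 1/b₀, and ‖H_{t+1}⁻¹ H_t‖ ≤ 1 + γ/2 for all t. Then for every t ≥ 1, ‖x_t‖ ≤ κ·(1 − γ/2)^{t−1}·‖x₁‖ + (2κ/γ)·max_{1 ≤ s ≤ t−1} ‖ζ_s‖. -/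
open Matrix
open scoped Matrix.Norms.L2Operator

lemma norm_toEuclideanLin_le {n m : ℕ} (A : Matrix (Fin m) (Fin n) ℝ)
    (v : EuclideanSpace ℝ (Fin n)) : ‖toEuclideanLin A v‖ ≤ ‖A‖ * ‖v‖ :=
  A.l2_opNorm_mulVec v

lemma toEuclideanLin_mul_apply {n : ℕ} (A B : Matrix (Fin n) (Fin n) ℝ)
    (v : EuclideanSpace ℝ (Fin n)) :
    toEuclideanLin (A * B) v = toEuclideanLin A (toEuclideanLin B v) := by
  simp [toEuclideanLin_apply, mulVec_mulVec]

lemma toEuclideanLin_one_apply {n : ℕ} (v : EuclideanSpace ℝ (Fin n)) :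
    toEuclideanLin (1 : Matrix (Fin n) (Fin n) ℝ) v = v := by
  simp [toEuclideanLin_apply]

lemma indSup_eq (F : Finset ℕ) (f : ℕ → ℝ) (s : ℕ) :
    (⨆ _ : s ∈ F, f s) = if s ∈ F then f s else 0 := by
  split_ifs with h
  · exact ciSup_pos h
  · haveI : IsEmpty (s ∈ F) := ⟨h⟩
    exact Real.iSup_of_isEmpty _

lemma indSup_bdd (F : Finset ℕ) (f : ℕ → ℝ) :
    BddAbove (Set.range fun s => ⨆ _ : s ∈ F, f s) := by
  apply Set.Finite.bddAbove
  apply Set.Finite.subset (Set.Finite.insert 0 (F.finite_toSet.image f))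
  rintro y ⟨s, rfl⟩
  simp only []
  rw [indSup_eq]
  split_ifs with h
  · exact Set.mem_insert_of_mem _ ⟨s, h, rfl⟩
  · exact Set.mem_insert _ _

lemma le_biSup' (F : Finset ℕ) (f : ℕ → ℝ) {s : ℕ} (hs : s ∈ F) :
    f s ≤ ⨆ s ∈ F, f s := by
  have h := le_ciSup (indSup_bdd F f) s
  rwa [indSup_eq, if_pos hs] at h

lemma biSup_nonneg' (F : Finset ℕ) (f : ℕ → ℝ) (hf : ∀ s, 0 ≤ f s) :
    0 ≤ ⨆ s ∈ F, f s := by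
  have h := le_ciSup (indSup_bdd F f) 0
  rw [indSup_eq] at h
  refine le_trans ?_ h
  split_ifs with h0
  · exact hf 0
  · exact le_refl 0

lemma biSup_mono' (F G : Finset ℕ) (f : ℕ → ℝ) (hf : ∀ s, 0 ≤ f s) (hFG : F ⊆ G) :
    (⨆ s ∈ F, f s) ≤ ⨆ s ∈ G, f s := by
  refine ciSup_mono (indSup_bdd G f) fun s => ?_
  rw [indSup_eq, indSup_eq]
  split_ifs with h1 h2
  · exact le_refl _
  · exact absurd (hFG h1) h2
  · exact hf s
  · exact le_refl 0


/-- Deterministic state-norm bound under a `(κ,γ)`-strongly sequentially stabilizing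
sequence of closed-loop matrices: if `x_{t+1} = M_t x_t + ζ_t` with
`M_t = H_t L_t H_t⁻¹`, `‖L_t‖ ≤ 1 − γ`, `‖H_t‖ ≤ B₀`, `‖H_t⁻¹‖ ≤ 1/b₀`, and
`‖H_{t+1}⁻¹ H_t‖ ≤ 1 + γ/2` for all `t ≥ 1`, then for all `t ≥ 1`,
`‖x_t‖ ≤ κ·(1 − γ/2)^{t−1}·‖x₁‖ + (2κ/γ)·max_{1 ≤ s ≤ t−1} ‖ζ_s‖` with `κ = B₀/b₀`. -/
theorem state_norm_bound_sequential {n : ℕ}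
    (γ B₀ b₀ : ℝ) (hγ0 : 0 < γ) (hγ1 : γ < 1) (hB₀ : 0 < B₀) (hb₀ : 0 < b₀)
    (x ζ : ℕ → EuclideanSpace ℝ (Fin n))
    (M H L : ℕ → Matrix (Fin n) (Fin n) ℝ)
    (hdyn : ∀ t, 1 ≤ t → x (t + 1) = toEuclideanLin (M t) (x t) + ζ t)
    (hfac : ∀ t, 1 ≤ t → M t = H t * L t * (H t)⁻¹)
    (hHinv : ∀ t, 1 ≤ t → IsUnit (H t).det)
    (hL : ∀ t, 1 ≤ t → ‖L t‖ ≤ 1 - γ)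
    (hH : ∀ t, 1 ≤ t → ‖H t‖ ≤ B₀)
    (hHinvNorm : ∀ t, 1 ≤ t → ‖(H t)⁻¹‖ ≤ 1 / b₀)
    (hseq : ∀ t, 1 ≤ t → ‖(H (t + 1))⁻¹ * H t‖ ≤ 1 + γ / 2) :
    ∀ t, 1 ≤ t →
      ‖x t‖ ≤ (B₀ / b₀) * (1 - γ / 2) ^ (t - 1) * ‖x 1‖ +
        (2 * (B₀ / b₀) / γ) * ⨆ s ∈ Finset.Icc 1 (t - 1), ‖ζ s‖ := by
  set ρ : ℝ := 1 - γ / 2 with hρdef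
  have hρ0 : 0 ≤ ρ := by simp only [hρdef]; linarith
  set C : ℝ := 2 / (γ * b₀) with hCdef
  have hC0 : 0 ≤ C := by positivity
  set v : ℕ → EuclideanSpace ℝ (Fin n) := fun t => toEuclideanLin ((H t)⁻¹) (x t) with hvdef
  clear_value ρ C v
  -- one-step recursion for v
  have hstep : ∀ t, 1 ≤ t → ‖v (t + 1)‖ ≤ ρ * ‖v t‖ + (1 / b₀) * ‖ζ t‖ := by
    intro t ht
    have e1 : v (t + 1) =
        toEuclideanLin ((H (t + 1))⁻¹ * H t) (toEuclideanLin (L t) (v t)) +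
          toEuclideanLin ((H (t + 1))⁻¹) (ζ t) := by
      simp only [hvdef, hdyn t ht, map_add, hfac t ht]
      congr 1
      rw [← toEuclideanLin_mul_apply, ← toEuclideanLin_mul_apply, ← toEuclideanLin_mul_apply]
      congr 1
      noncomm_ring
    have h1 : ‖toEuclideanLin ((H (t + 1))⁻¹ * H t) (toEuclideanLin (L t) (v t))‖ ≤
        (1 + γ / 2) * ((1 - γ) * ‖v t‖) := by
      refine le_trans (norm_toEuclideanLin_le _ _) ?_
      have h2 : ‖toEuclideanLin (L t) (v t)‖ ≤ (1 - γ) * ‖v t‖ :=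
        le_trans (norm_toEuclideanLin_le _ _)
          (mul_le_mul_of_nonneg_right (hL t ht) (norm_nonneg _))
      exact mul_le_mul (hseq t ht) h2 (norm_nonneg _) (by linarith)
    have h3 : ‖toEuclideanLin ((H (t + 1))⁻¹) (ζ t)‖ ≤ (1 / b₀) * ‖ζ t‖ :=
      le_trans (norm_toEuclideanLin_le _ _)
        (mul_le_mul_of_nonneg_right (hHinvNorm (t + 1) (by omega)) (norm_nonneg _))
    have h4 := norm_add_le (toEuclideanLin ((H (t + 1))⁻¹ * H t) (toEuclideanLin (L t) (v t)))
      (toEuclideanLin ((H (t + 1))⁻¹) (ζ t))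
    rw [← e1] at h4
    have hv0 : (0 : ℝ) ≤ ‖v t‖ := norm_nonneg _
    have hineq : (1 + γ / 2) * (1 - γ) ≤ ρ := by rw [hρdef]; nlinarith
    nlinarith [h4, h1, h3, mul_le_mul_of_nonneg_right hineq hv0]
  -- main induction
  have main : ∀ t, 1 ≤ t → ‖v t‖ ≤ ρ ^ (t - 1) * ‖v 1‖ +
      C * ⨆ s ∈ Finset.Icc 1 (t - 1), ‖ζ s‖ := by
    intro t ht
    induction t, ht using Nat.le_induction with
    | base =>
      have hZ : 0 ≤ ⨆ s ∈ Finset.Icc 1 (1 - 1), ‖ζ s‖ :=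
        biSup_nonneg' _ _ fun s => norm_nonneg _
      simp only [Nat.sub_self, pow_zero, one_mul]
      nlinarith
    | succ t ht ih =>
      have hρpow : ρ * ρ ^ (t - 1) = ρ ^ t := by
        rw [← pow_succ']
        congr 1
        omega
      have hts : t + 1 - 1 = t := rfl
      rw [hts]
      set Z1 : ℝ := ⨆ s ∈ Finset.Icc 1 (t - 1), ‖ζ s‖ with hZ1
      set Z2 : ℝ := ⨆ s ∈ Finset.Icc 1 t, ‖ζ s‖ with hZ2
      have hZmono : Z1 ≤ Z2 :=
        biSup_mono' _ _ _ (fun s => norm_nonneg _)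
          (Finset.Icc_subset_Icc_right (by omega))
      have hZ2nn : 0 ≤ Z2 := biSup_nonneg' _ _ fun s => norm_nonneg _
      have hζle : ‖ζ t‖ ≤ Z2 :=
        le_biSup' (Finset.Icc 1 t) (fun s => ‖ζ s‖) (Finset.mem_Icc.mpr ⟨ht, le_refl t⟩)
      have hid : ρ * C + 1 / b₀ = C := by
        simp only [hρdef, hCdef]
        field_simp
        ring
      have hidZ : (ρ * C + 1 / b₀) * Z2 = C * Z2 := by rw [hid]
      have hs := hstep t ht
      have hv1nn : (0 : ℝ) ≤ ‖v 1‖ := norm_nonneg _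
      clear_value Z1 Z2
      calc ‖v (t + 1)‖ ≤ ρ * ‖v t‖ + 1 / b₀ * ‖ζ t‖ := hs
        _ ≤ ρ * (ρ ^ (t - 1) * ‖v 1‖ + C * Z1) + 1 / b₀ * Z2 := by
            have h5 := mul_le_mul_of_nonneg_left ih hρ0
            have h6 := mul_le_mul_of_nonneg_left hζle
              (by positivity : (0:ℝ) ≤ 1 / b₀)
            linarith
        _ ≤ ρ * (ρ ^ (t - 1) * ‖v 1‖ + C * Z2) + 1 / b₀ * Z2 := by
            have h7 := mul_le_mul_of_nonneg_left hZmono (mul_nonneg hρ0 hC0)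
            nlinarith [h7]
        _ = ρ ^ t * ‖v 1‖ + C * Z2 := by
            linear_combination ‖v 1‖ * hρpow + hidZ
  -- conclude
  intro t ht
  have hx : x t = toEuclideanLin (H t) (v t) := by
    rw [hvdef]
    rw [← toEuclideanLin_mul_apply, mul_nonsing_inv _ (hHinv t ht), toEuclideanLin_one_apply]
  have hxB : ‖x t‖ ≤ B₀ * ‖v t‖ := by
    rw [hx]
    exact le_trans (norm_toEuclideanLin_le _ _)
      (mul_le_mul_of_nonneg_right (hH t ht) (norm_nonneg _))
  have hv1 : ‖v 1‖ ≤ (1 / b₀) * ‖x 1‖ := by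
    rw [hvdef]
    exact le_trans (norm_toEuclideanLin_le _ _)
      (mul_le_mul_of_nonneg_right (hHinvNorm 1 le_rfl) (norm_nonneg _))
  have hm := main t ht
  set Z : ℝ := ⨆ s ∈ Finset.Icc 1 (t - 1), ‖ζ s‖ with hZ
  have hZnn : 0 ≤ Z := biSup_nonneg' _ _ fun s => norm_nonneg _
  have hρpow : (0 : ℝ) ≤ ρ ^ (t - 1) := pow_nonneg hρ0 _
  have hBC : B₀ * C = 2 * (B₀ / b₀) / γ := by
    simp only [hCdef]
    field_simp
  have hx1nn : (0 : ℝ) ≤ ‖x 1‖ := norm_nonneg _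
  have hBCZ : B₀ * C * Z = 2 * (B₀ / b₀) / γ * Z := by rw [hBC]
  clear_value Z
  have h8 : ρ ^ (t - 1) * ‖v 1‖ ≤ ρ ^ (t - 1) * (1 / b₀ * ‖x 1‖) :=
    mul_le_mul_of_nonneg_left hv1 hρpow
  have h9 := mul_le_mul_of_nonneg_left h8 hB₀.le
  calc ‖x t‖ ≤ B₀ * ‖v t‖ := hxB
    _ ≤ B₀ * (ρ ^ (t - 1) * ‖v 1‖ + C * Z) := mul_le_mul_of_nonneg_left hm hB₀.le
    _ ≤ B₀ * (ρ ^ (t - 1) * (1 / b₀ * ‖x 1‖) + C * Z) := by linarith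
    _ = B₀ / b₀ * ρ ^ (t - 1) * ‖x 1‖ + 2 * (B₀ / b₀) / γ * Z := by
        linear_combination hBCZ
end

section
/- Let D be a real symmetric n×n matrix and let M be an n×n real matrix that is (κ,γ)-strongly stable for some κ > 0 and 0 < γ < 1. If D ⪯ MᵀDM, then D ⪯ 0. -/
open Matrix
open scoped Matrix.Norms.L2Operator

/-- A real square matrix `M` is `(κ,γ)`-strongly stable if there exist an invertible `H`
and an `L` with `M = H L H⁻¹`, `‖L‖ ≤ 1 − γ` and `‖H‖·‖H⁻¹‖ ≤ κ`
(spectral norms). -/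
def StronglyStable {n : ℕ} (M : Matrix (Fin n) (Fin n) ℝ) (κ γ : ℝ) : Prop :=
  ∃ H L : Matrix (Fin n) (Fin n) ℝ,
    IsUnit H.det ∧ M = H * L * H⁻¹ ∧ ‖L‖ ≤ 1 - γ ∧ ‖H‖ * ‖H⁻¹‖ ≤ κ

/-- If `D` is symmetric, `M` is `(κ,γ)`-strongly stable, and `D ⪯ MᵀDM`, then `D ⪯ 0`. -/
theorem negSemidef_of_le_conj {n : ℕ}
    (D M : Matrix (Fin n) (Fin n) ℝ) (κ γ : ℝ)
    (hκ : 0 < κ) (hγ0 : 0 < γ) (hγ1 : γ < 1)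
    (hD : D.IsSymm) (hM : StronglyStable M κ γ)
    (h : (Mᵀ * D * M - D).PosSemidef) :
    (-D).PosSemidef := by
  obtain ⟨H, L, hH, hMH, hL, hHκ⟩ := hM
  -- one-step inequality
  have step : ∀ y : Fin n → ℝ, y ⬝ᵥ (D *ᵥ y) ≤ (M *ᵥ y) ⬝ᵥ (D *ᵥ (M *ᵥ y)) := by
    intro y
    have := h.dotProduct_mulVec_nonneg y
    simp only [star_trivial, sub_mulVec, dotProduct_sub] at this
    have h1 : y ⬝ᵥ ((Mᵀ * D * M) *ᵥ y) = (M *ᵥ y) ⬝ᵥ (D *ᵥ (M *ᵥ y)) := by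
      rw [← mulVec_mulVec, ← mulVec_mulVec, dotProduct_mulVec, vecMul_transpose,
        dotProduct_mulVec, ← dotProduct_mulVec]
    linarith [this, h1.le, h1.ge]
  -- quadratic form bound
  have quad : ∀ y : Fin n → ℝ,
      y ⬝ᵥ (D *ᵥ y) ≤ ‖D‖ * ‖(EuclideanSpace.equiv (Fin n) ℝ).symm y‖ ^ 2 := by
    intro y
    set y' : EuclideanSpace ℝ (Fin n) := (EuclideanSpace.equiv (Fin n) ℝ).symm y with hy'
    set z' : EuclideanSpace ℝ (Fin n) := (EuclideanSpace.equiv (Fin n) ℝ).symm (D *ᵥ y)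
      with hz'
    have hinner : y ⬝ᵥ (D *ᵥ y) = inner ℝ y' z' := by
      rw [EuclideanSpace.inner_eq_star_dotProduct, dotProduct_comm]
      rfl
    have h1 : inner ℝ y' z' ≤ ‖y'‖ * ‖z'‖ := real_inner_le_norm y' z'
    have h2 : ‖z'‖ ≤ ‖D‖ * ‖y'‖ := D.l2_opNorm_mulVec y'
    have hy0 : (0:ℝ) ≤ ‖y'‖ := norm_nonneg _
    nlinarith [hinner, h1, h2, hy0]
  -- powers of M
  have hpow : ∀ k : ℕ, M ^ k = H * (L ^ k) * H⁻¹ := by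
    intro k
    induction k with
    | zero => simp [Matrix.mul_nonsing_inv _ hH]
    | succ k ih =>
      rw [pow_succ, ih, hMH]
      rw [show H * L ^ k * H⁻¹ * (H * L * H⁻¹)
          = H * L ^ k * (H⁻¹ * H) * L * H⁻¹ by noncomm_ring]
      rw [Matrix.nonsing_inv_mul _ hH]
      rw [pow_succ]
      noncomm_ring
  have hγ' : (0:ℝ) ≤ 1 - γ := by linarith
  have hLn : (0:ℝ) ≤ ‖L‖ := norm_nonneg _
  have hMk : ∀ k : ℕ, ‖M ^ k‖ ≤ κ * (1 - γ) ^ k := by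
    intro k
    cases k with
    | zero =>
      simp only [pow_zero, mul_one]
      calc ‖(1 : Matrix (Fin n) (Fin n) ℝ)‖ = ‖H * H⁻¹‖ := by
            rw [Matrix.mul_nonsing_inv _ hH]
        _ ≤ ‖H‖ * ‖H⁻¹‖ := norm_mul_le _ _
        _ ≤ κ := hHκ
    | succ k => ?_
    set k' := k + 1 with hk'
    have h1 : ‖M ^ k'‖ ≤ ‖H‖ * ‖L ^ k'‖ * ‖H⁻¹‖ := by
      rw [hpow k']
      calc ‖H * L ^ k' * H⁻¹‖ ≤ ‖H * L ^ k'‖ * ‖H⁻¹‖ := norm_mul_le _ _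
        _ ≤ ‖H‖ * ‖L ^ k'‖ * ‖H⁻¹‖ :=
          mul_le_mul_of_nonneg_right (norm_mul_le _ _) (norm_nonneg _)
    have h2 : ‖L ^ k'‖ ≤ (1 - γ) ^ k' := by
      calc ‖L ^ k'‖ ≤ ‖L‖ ^ k' := norm_pow_le' L (Nat.succ_pos k)
        _ ≤ (1 - γ) ^ k' := pow_le_pow_left₀ hLn hL k' 
    have hHn : (0:ℝ) ≤ ‖H‖ := norm_nonneg _
    have hHin : (0:ℝ) ≤ ‖H⁻¹‖ := norm_nonneg _
    have hpk : (0:ℝ) ≤ (1 - γ) ^ k' := pow_nonneg hγ' k'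
    nlinarith [norm_nonneg (L ^ k')]
  refine PosSemidef.of_dotProduct_mulVec_nonneg ?_ ?_
  · have : (-D)ᴴ = -Dᴴ := Matrix.conjTranspose_neg D
    rw [Matrix.IsHermitian, this]
    have : Dᴴ = Dᵀ := by
      ext i j; simp [Matrix.conjTranspose_apply]
    rw [this, hD.eq]
  · intro x
    simp only [star_trivial, neg_mulVec, dotProduct_neg]
    rw [le_neg, neg_zero]
    -- show x ⬝ᵥ D x ≤ 0 via iteration
    set x' : EuclideanSpace ℝ (Fin n) := (EuclideanSpace.equiv (Fin n) ℝ).symm x with hx'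
    have key : ∀ k : ℕ, x ⬝ᵥ (D *ᵥ x) ≤ ((M ^ k) *ᵥ x) ⬝ᵥ (D *ᵥ ((M ^ k) *ᵥ x)) := by
      intro k
      induction k with
      | zero => simp
      | succ k ih =>
        refine ih.trans ?_
        have e : (M ^ (k + 1)) *ᵥ x = M *ᵥ ((M ^ k) *ᵥ x) := by
          rw [pow_succ', ← mulVec_mulVec]
        rw [e]
        exact step _
    have bound : ∀ k : ℕ,
        x ⬝ᵥ (D *ᵥ x) ≤ ‖D‖ * (κ * ‖x'‖) ^ 2 * ((1 - γ) ^ 2) ^ k := by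
      intro k
      refine (key k).trans ?_
      have hq := quad ((M ^ k) *ᵥ x)
      have hnv : ‖(EuclideanSpace.equiv (Fin n) ℝ).symm ((M ^ k) *ᵥ x)‖
          ≤ κ * (1 - γ) ^ k * ‖x'‖ := by
        have h1 : ‖(EuclideanSpace.equiv (Fin n) ℝ).symm ((M ^ k) *ᵥ x)‖
            ≤ ‖M ^ k‖ * ‖x'‖ := (M ^ k).l2_opNorm_mulVec x'
        have h2 := hMk k
        nlinarith [norm_nonneg x', norm_nonneg (M ^ k)]
      have hD0 : (0:ℝ) ≤ ‖D‖ := norm_nonneg _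
      have hn0 : (0:ℝ) ≤ ‖(EuclideanSpace.equiv (Fin n) ℝ).symm ((M ^ k) *ᵥ x)‖ :=
        norm_nonneg _
      have hsq : ‖(EuclideanSpace.equiv (Fin n) ℝ).symm ((M ^ k) *ᵥ x)‖ ^ 2
          ≤ (κ * (1 - γ) ^ k * ‖x'‖) ^ 2 := by
        exact pow_le_pow_left₀ hn0 hnv 2
      calc ((M ^ k) *ᵥ x) ⬝ᵥ (D *ᵥ ((M ^ k) *ᵥ x))
          ≤ ‖D‖ * ‖(EuclideanSpace.equiv (Fin n) ℝ).symm ((M ^ k) *ᵥ x)‖ ^ 2 := hq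
        _ ≤ ‖D‖ * (κ * (1 - γ) ^ k * ‖x'‖) ^ 2 :=
            mul_le_mul_of_nonneg_left hsq hD0
        _ = ‖D‖ * (κ * ‖x'‖) ^ 2 * ((1 - γ) ^ 2) ^ k := by
            rw [show ((1 - γ) ^ 2) ^ k = ((1 - γ) ^ k) ^ 2 from by
              rw [← pow_mul, ← pow_mul, Nat.mul_comm]]
            ring
    have hr0 : (0:ℝ) ≤ (1 - γ) ^ 2 := sq_nonneg _
    have hr1 : (1 - γ) ^ 2 < 1 := by nlinarith
    have htend : Filter.Tendsto
        (fun k : ℕ => ‖D‖ * (κ * ‖x'‖) ^ 2 * ((1 - γ) ^ 2) ^ k)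
        Filter.atTop (nhds 0) := by
      have := tendsto_pow_atTop_nhds_zero_of_lt_one hr0 hr1
      have h2 := this.const_mul (‖D‖ * (κ * ‖x'‖) ^ 2)
      simpa using h2
    exact ge_of_tendsto' htend bound
end
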